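/- Let D be a regular λ⁺-excellent filter on I, D₁ an ultrafilter on I extending D, B a Boolean algebra, J : P(I) → B a surjective homomorphism with D = J⁻¹({1_B}), and D* = {b ∈ B : J(A) = b implies A ∈ D₁}. Suppose ⟨a_u : u ∈ [λ]^{<ω}⟩ is a sequence of elements of D* that is multiplicative modulo D* in B and lifts to ⟨A_u⟩ ⊆ D₁ with J(A_u) = a_u. If ⟨b_u⟩ is a multiplicative refinement of ⟨a_u⟩ in B with each b_u ∈ D*, then ⟨A_u⟩ has a genuinely multiplicative refinement ⟨C_u⟩ with each C_u ∈ D₁ and C_u ⊆ A_u. -/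
import Mathlib


open scoped Classical

universe u v w

/-- Terms in the language of Boolean algebras, with variables from `V`. -/
inductive BTerm (V : Type v) : Type v where
  | var : V → BTerm V
  | bot : BTerm V
  | top : BTerm V
  | inf : BTerm V → BTerm V → BTerm V
  | sup : BTerm V → BTerm V → BTerm V
  | compl : BTerm V → BTerm V

/-- Evaluation of a Boolean term in a Boolean algebra, given values for the variables. -/
def BTerm.eval {V : Type v} {B : Type u} [BooleanAlgebra B] (f : V → B) : BTerm V → B
  | .var v => f v
  | .bot => ⊥
  | .top => ⊤
  | .inf s t => s.eval f ⊓ t.eval f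
  | .sup s t => s.eval f ⊔ t.eval f
  | .compl t => (t.eval f)ᶜ

/-- `σ ∈ Λ_{D, Ā↾u}`: the Boolean term `σ`, in variables indexed by the subsets of the
finite set `u`, vanishes modulo `D` (i.e. the complement of its value lies in `D`) on
every sequence obtained from `Ā↾𝒫(u)` by replacing the entries indexed by sets not
contained in some `w ⊆ u` by `∅`.  (Equivalently, `σ` vanishes in the quotient Boolean
algebra `𝒫(I)/D` on every member of `N(Ā↾𝒫(u))`.) -/
def InLambda {ι : Type w} {I : Type u} (D : Filter I) (A : Finset ι → Set I)
    (u : Finset ι) (σ : BTerm {v : Finset ι // v ⊆ u}) : Prop :=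
  ∀ w : Finset ι, w ⊆ u →
    (BTerm.eval (fun v => if v.1 ⊆ w then A v.1 else (∅ : Set I)) σ)ᶜ ∈ D

/-- A filter `D` on `I` is `λ⁺`-excellent if every `[λ]^{<ℵ₀}`-indexed sequence
`Ā` of subsets of `I` admits a refinement `B̄` with `B_u ⊆ A_u`, `B_u = A_u mod D`,
such that every distinguished Boolean term (member of `Λ_{D, Ā↾u}`) evaluates to the
genuinely empty set on `B̄`. -/
def IsExcellent {I : Type u} (lam : Cardinal.{w}) (D : Filter I) : Prop :=
  ∀ A : Finset lam.out → Set I, ∃ B : Finset lam.out → Set I,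
    (∀ u, B u ⊆ A u) ∧
    (∀ u, {t | t ∈ A u ↔ t ∈ B u} ∈ D) ∧
    ∀ (u : Finset lam.out) (σ : BTerm {v : Finset lam.out // v ⊆ u}),
      InLambda D A u σ → BTerm.eval (fun v => B v.1) σ = ∅


/-- (From the proof of separation of variables.)  Let `D` be a regular `λ⁺`-excellent
filter on `I`, `D₁` an ultrafilter on `I` extending `D`, `B` a Boolean algebra,
`J : 𝒫(I) → B` a surjective homomorphism with `D = J⁻¹({1_B})`, and
`D* = {b ∈ B : J(A) = b implies A ∈ D₁}`.  Suppose `⟨a_u : u ∈ [λ]^{<ℵ₀}⟩` is a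
sequence of elements of `D*` that is multiplicative modulo `D*` in `B` and lifts to
`⟨A_u⟩ ⊆ D₁` with `J(A_u) = a_u`.  If `⟨b_u⟩` is a multiplicative refinement of
`⟨a_u⟩` in `B` with each `b_u ∈ D*`, then `⟨A_u⟩` has a genuinely multiplicative
refinement `⟨C_u⟩` with each `C_u ∈ D₁` and `C_u ⊆ A_u`. -/
theorem lift_multiplicative_refinement {I : Type u} (lam : Cardinal.{w})
    (D : Filter I) (hexc : IsExcellent lam D)
    -- regularity of `D`
    (X : lam.out → Set I) (hX : ∀ i, X i ∈ D) (hX' : ∀ t : I, {i | t ∈ X i}.Finite)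
    (D₁ : Ultrafilter I) (hD₁ : ∀ A ∈ D, A ∈ D₁)
    {B : Type v} [BooleanAlgebra B]
    (J : Set I → B) (hsurj : Function.Surjective J)
    (htop : J Set.univ = ⊤) (hinf : ∀ A A' : Set I, J (A ∩ A') = J A ⊓ J A')
    (hcompl : ∀ A : Set I, J Aᶜ = (J A)ᶜ)
    (hker : ∀ A : Set I, A ∈ D ↔ J A = ⊤)
    (Dstar : Set B) (hDstar : Dstar = {b : B | ∀ A : Set I, J A = b → A ∈ D₁})
    (a : Finset lam.out → B) (ha : ∀ u, a u ∈ Dstar)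
    (hamult : ∀ u v : Finset lam.out,
      (symmDiff (a u ⊓ a v) (a (u ∪ v)))ᶜ ∈ Dstar)
    (A : Finset lam.out → Set I) (hA : ∀ u, A u ∈ D₁) (hJA : ∀ u, J (A u) = a u)
    (b : Finset lam.out → B) (hb : ∀ u, b u ∈ Dstar) (hba : ∀ u, b u ≤ a u)
    (hbmult : ∀ u v : Finset lam.out, b u ⊓ b v = b (u ∪ v)) :
    ∃ C : Finset lam.out → Set I,
      (∀ u, C u ∈ D₁) ∧ (∀ u, C u ⊆ A u) ∧
      ∀ u v : Finset lam.out, C u ∩ C v = C (u ∪ v) := by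
  subst hDstar
  choose B' hB' using fun u => hsurj (b u)
  set Bs : Finset lam.out → Set I := fun u => B' u ∩ A u with hBs
  have hJB : ∀ u, J (Bs u) = b u := by
    intro u
    simp only [Bs, hinf, hB', hJA]
    exact inf_eq_left.2 (hba u)
  have hBD1 : ∀ u, Bs u ∈ D₁ := fun u => hb u _ (hJB u)
  have hBA : ∀ u, Bs u ⊆ A u := fun u => Set.inter_subset_right
  have hsup' : ∀ S S' : Set I, J (S ∪ S') = J S ⊔ J S' := by
    intro S S'
    have h1 : S ∪ S' = (Sᶜ ∩ S'ᶜ)ᶜ := by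
      rw [Set.compl_inter, compl_compl, compl_compl]
    rw [h1, hcompl, hinf, hcompl, hcompl, compl_inf, compl_compl, compl_compl]
  have hsdiff : ∀ S S' : Set I, J (S \ S') = J S \ J S' := by
    intro S S'
    rw [Set.diff_eq, hinf, hcompl, sdiff_eq]
  have hsymm : ∀ S S' : Set I, J (symmDiff S S') = symmDiff (J S) (J S') := by
    intro S S'
    rw [symmDiff_def, symmDiff_def]
    show J ((S \ S') ∪ (S' \ S)) = _
    rw [hsup', hsdiff, hsdiff]
  have hBmult : ∀ u v, (symmDiff (Bs u ∩ Bs v) (Bs (u ∪ v)))ᶜ ∈ D := by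
    intro u v
    rw [hker, hcompl]
    have h2 : J (symmDiff (Bs u ∩ Bs v) (Bs (u ∪ v))) = ⊥ := by
      rw [hsymm, hinf, hJB, hJB, hJB, hbmult, symmDiff_self]
    rw [h2, compl_bot]
  obtain ⟨C, hCB, hCeq, hCterm⟩ := hexc Bs
  refine ⟨C, ?_, fun u => (hCB u).trans (hBA u), ?_⟩
  · intro u
    have h1 : {t | t ∈ Bs u ↔ t ∈ C u} ∈ (D₁ : Filter I) := hD₁ _ (hCeq u)
    refine Filter.mem_of_superset (Filter.inter_mem h1 (hBD1 u)) ?_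
    rintro t ⟨ht1, ht2⟩
    exact ht1.1 ht2
  · intro u v
    have hu : u ⊆ u ∪ v := Finset.subset_union_left
    have hv : v ⊆ u ∪ v := Finset.subset_union_right
    set U := u ∪ v with hU
    let xu : BTerm {w : Finset lam.out // w ⊆ U} := .var ⟨u, hu⟩
    let xv : BTerm {w : Finset lam.out // w ⊆ U} := .var ⟨v, hv⟩
    let xU : BTerm {w : Finset lam.out // w ⊆ U} := .var ⟨U, subset_refl U⟩
    let σ : BTerm {w : Finset lam.out // w ⊆ U} :=
      .sup (.inf (.inf xu xv) (.compl xU)) (.inf xU (.compl (.inf xu xv)))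
    have hσ : InLambda D Bs U σ := by
      intro w hw
      by_cases hUw : U ⊆ w
      · simp only [σ, xu, xv, xU, BTerm.eval, if_pos (hu.trans hUw),
          if_pos (hv.trans hUw), if_pos hUw]
        have h3 := hBmult u v
        rw [symmDiff_eq] at h3
        exact h3
      · have hfU : (if U ⊆ w then Bs U else (∅ : Set I)) = ∅ := if_neg hUw
        have hiz : (if u ⊆ w then Bs u else (∅ : Set I)) ⊓
            (if v ⊆ w then Bs v else (∅ : Set I)) = ∅ := by
          by_cases huw : u ⊆ w
          · by_cases hvw : v ⊆ w
            · exact absurd (Finset.union_subset huw hvw) hUw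
            · simp [hvw]
          · simp [huw]
        simp only [σ, xu, xv, xU, BTerm.eval, hfU, hiz]
        simp [Filter.univ_mem]
    have h4 := hCterm U σ hσ
    simp only [σ, xu, xv, xU, BTerm.eval] at h4
    have h5 : symmDiff (C u ∩ C v) (C U) = (∅ : Set I) := by
      rw [symmDiff_eq]
      exact h4
    have := symmDiff_eq_bot.1 (h5.trans (Set.bot_eq_empty (α := I)).symm)
    exact this
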